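/- arXiv:2403.02291 — 3 statements merged into one kernel-verified Lean document; each statement's English description precedes it below -/
import Mathlib

section
/- For every integer g ≥ 1 and every integer e, the corank of G_{e,g} equals g: there exists a surjective group homomorphism from G_{e,g} onto the free group FreeGroup (Fin g) of rank g, and there is no surjective group homomorphism from G_{e,g} onto the free group FreeGroup (Fin (g+1)) of rank g+1. -/
/-- The generator `aᵢ` of the circle-bundle group, as an element of the free
group on `2g+1` generators (indexed so that `aᵢ ↦ 2i`, `bᵢ ↦ 2i+1`, `h ↦ 2g`). -/
def genA (g : ℕ) (i : Fin g) : FreeGroup (Fin (2 * g + 1)) :=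
  FreeGroup.of ⟨2 * (i : ℕ), by have := i.isLt; omega⟩

/-- The generator `bᵢ`. -/
def genB (g : ℕ) (i : Fin g) : FreeGroup (Fin (2 * g + 1)) :=
  FreeGroup.of ⟨2 * (i : ℕ) + 1, by have := i.isLt; omega⟩

/-- The generator `h`. -/
def genH (g : ℕ) : FreeGroup (Fin (2 * g + 1)) :=
  FreeGroup.of ⟨2 * g, by omega⟩

open scoped commutatorElement

/-- The relators `[aᵢ, h]`, `[bᵢ, h]` (for `i = 1, …, g`) and
`([a₁,b₁]⋯[a_g,b_g]) * h^(-e)` of the fundamental group of the orientable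
circle bundle over the closed orientable surface of genus `g`
with Euler number `e`. -/
def circleRels (g : ℕ) (e : ℤ) : Set (FreeGroup (Fin (2 * g + 1))) :=
  {r | ∃ i : Fin g, r = ⁅genA g i, genH g⁆ ∨ r = ⁅genB g i, genH g⁆} ∪
    {(List.ofFn fun i : Fin g => ⁅genA g i, genB g i⁆).prod * (genH g) ^ (-e)}

/-- `G_{e,g}`, the fundamental group of the orientable circle bundle over the closed
orientable surface of genus `g` with Euler number `e`, as a presented group. -/
def CircleBundleGroup (g : ℕ) (e : ℤ) : Type :=
  PresentedGroup (circleRels g e)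

instance (g : ℕ) (e : ℤ) : Group (CircleBundleGroup g e) :=
  inferInstanceAs (Group (PresentedGroup (circleRels g e)))


/-! ### Auxiliary material -/

namespace CorankProof

/-! #### Free groups: trivial center -/

open FreeGroup in
lemma invRev_append' {α : Type*} (M N : List (α × Bool)) :
    invRev (M ++ N) = invRev N ++ invRev M := by
  simp [invRev]

open FreeGroup in
lemma invRev_singleton' {α : Type*} (x : α) (u : Bool) : invRev [(x, u)] = [(x, !u)] := by
  simp [invRev]

open FreeGroup in
lemma reduce_cons' {α : Type*} [DecidableEq α] (x h : α × Bool) (t : List (α × Bool))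
    (hred : reduce (h :: t) = h :: t)
    (hc : ¬(x.1 = h.1 ∧ x.2 = !h.2)) : reduce (x :: h :: t) = x :: h :: t := by
  rw [reduce.cons, hred]
  simp only [hc, if_false]

open FreeGroup in
lemma eq_one_of_commute_of {α : Type*} [DecidableEq α] (a b : α) (hab : a ≠ b)
    (w : FreeGroup α) (hw : ∀ u : α, Commute (FreeGroup.of u) w) : w = 1 := by
  by_contra hne
  have hLnil : w.toWord ≠ [] := fun h => hne (toWord_eq_nil_iff.mp h)
  set L := w.toWord with hLdef
  have hred : reduce L = L := reduce_toWord w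
  have hwmk : w = mk L := (mk_toWord).symm
  obtain ⟨⟨p, s⟩, t, hL⟩ : ∃ h t, L = h :: t := by
    cases hLt : L with
    | nil => exact absurd hLt hLnil
    | cons h t => exact ⟨h, t, rfl⟩
  set q : α := if p = a then b else a with hq
  have hqp : q ≠ p := by
    by_cases h : p = a
    · simpa [hq, h] using hab.symm
    · simpa [hq, h] using (Ne.symm h)
  rcases hlast : L.getLast hLnil with ⟨c, tb⟩
  set ε : Bool := if (c, tb) = (q, false) then false else true with hε
  set u : FreeGroup α := mk [(q, ε)] with hu
  have hcomm : u * w = w * u := by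
    have h1 : Commute (FreeGroup.of q) w := hw q
    cases hεv : ε with
    | true =>
      have : u = FreeGroup.of q := by rw [hu, hεv]; rfl
      rw [this]; exact h1
    | false =>
      have hval : u = (FreeGroup.of q)⁻¹ := by
        rw [hu, hεv, show (FreeGroup.of q : FreeGroup α) = mk [(q, true)] from rfl, inv_mk]
        simp [invRev]
      rw [hval]; exact h1.inv_left
  have h2 : (u * w).toWord = (q, ε) :: L := by
    rw [hu, hwmk, mul_mk, toWord_mk]
    show reduce ((q, ε) :: L) = (q, ε) :: L
    rw [hL] at hred ⊢
    exact reduce_cons' _ _ _ hred (by simp [hqp])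
  have hsplit : L = L.dropLast ++ [(c, tb)] := by
    conv_lhs => rw [← List.dropLast_append_getLast hLnil]
    rw [hlast]
  have hinvL : invRev L = (c, !tb) :: invRev L.dropLast := by
    conv_lhs => rw [hsplit]
    rw [invRev_append', invRev_singleton']
    rfl
  have hredinv : reduce (invRev L) = invRev L := by
    have := reduce_toWord w⁻¹
    rwa [toWord_inv, ← hLdef] at this
  have h3 : (w * u).toWord = L ++ [(q, ε)] := by
    have hwu : w * u = (u⁻¹ * w⁻¹)⁻¹ := by group
    have hui : u⁻¹ = mk [(q, !ε)] := by rw [hu, inv_mk, invRev_singleton']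
    have hwi : w⁻¹ = mk (invRev L) := by rw [hwmk, inv_mk]
    have hnc : ¬((q, !ε).1 = (c, !tb).1 ∧ (q, !ε).2 = !(c, !tb).2) := by
      simp only [Bool.not_not]
      rintro ⟨h1, h2⟩
      by_cases hcase : (c, tb) = (q, false)
      · have hε' : ε = false := by rw [hε, if_pos hcase]
        injection hcase with hc1 hc2
        rw [hc2] at h2
        simp [hε'] at h2
      · have hε' : ε = true := by rw [hε, if_neg hcase]
        rw [hε'] at h2
        have h1' : q = c := h1
        have h2' : false = tb := h2
        exact hcase (by rw [← h1', ← h2'])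
    have h4 : (u⁻¹ * w⁻¹).toWord = (q, !ε) :: invRev L := by
      rw [hui, hwi, mul_mk, toWord_mk]
      show reduce ((q, !ε) :: invRev L) = (q, !ε) :: invRev L
      rw [hinvL] at hredinv ⊢
      exact reduce_cons' _ _ _ hredinv hnc
    rw [hwu, toWord_inv, h4]
    show invRev ([(q, !ε)] ++ invRev L) = _
    rw [invRev_append', invRev_invRev, invRev_singleton', Bool.not_not]
  rw [hcomm] at h2
  rw [h3, hL] at h2
  simp only [List.cons_append, List.cons.injEq, Prod.mk.injEq] at h2
  exact hqp h2.1.1.symm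

/-! #### The integer Heisenberg group -/

@[ext] structure Heis where
  x : ℤ
  y : ℤ
  z : ℤ

namespace Heis

instance : Mul Heis := ⟨fun a b => ⟨a.x + b.x, a.y + b.y, a.z + b.z + a.x * b.y⟩⟩
instance : One Heis := ⟨⟨0, 0, 0⟩⟩
instance : Inv Heis := ⟨fun a => ⟨-a.x, -a.y, -a.z + a.x * a.y⟩⟩

@[simp] lemma mul_x (a b : Heis) : (a * b).x = a.x + b.x := rfl
@[simp] lemma mul_y (a b : Heis) : (a * b).y = a.y + b.y := rfl
@[simp] lemma mul_z (a b : Heis) : (a * b).z = a.z + b.z + a.x * b.y := rfl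
@[simp] lemma one_x : (1 : Heis).x = 0 := rfl
@[simp] lemma one_y : (1 : Heis).y = 0 := rfl
@[simp] lemma one_z : (1 : Heis).z = 0 := rfl
@[simp] lemma inv_x (a : Heis) : a⁻¹.x = -a.x := rfl
@[simp] lemma inv_y (a : Heis) : a⁻¹.y = -a.y := rfl
@[simp] lemma inv_z (a : Heis) : a⁻¹.z = -a.z + a.x * a.y := rfl

instance : Group Heis where
  mul_assoc a b c := by ext <;> (simp; try ring)
  one_mul a := by ext <;> simp
  mul_one a := by ext <;> simp
  inv_mul_cancel a := by ext <;> (simp; try ring)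

lemma commutator_eq (a b : Heis) : ⁅a, b⁆ = ⟨0, 0, a.x * b.y - b.x * a.y⟩ := by
  rw [commutatorElement_def]
  ext <;> (simp; try ring)

lemma prod_central (g : ℕ) (f : Fin g → ℤ) :
    (List.ofFn fun i => (⟨0, 0, f i⟩ : Heis)).prod = ⟨0, 0, ∑ i, f i⟩ := by
  induction g with
  | zero => rw [List.ofFn_zero, List.prod_nil]; ext <;> simp
  | succ m ih =>
    rw [List.ofFn_succ, List.prod_cons, ih fun i => f i.succ, Fin.sum_univ_succ]
    ext <;> simp

end Heis

/-! #### Linear algebra: a sum of `g` wedges being zero bounds the rank by `g` -/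

open Submodule Set in
lemma span_wedge (K : Type*) [Field K] (g : ℕ) :
    ∀ {V : Type*} [AddCommGroup V] [Module K V] (a b : Fin g → V),
    (∀ f : Module.Dual K V, ∑ i, (f (a i) • b i - f (b i) • a i) = 0) →
    ∃ c : Fin g → V, span K (range a ∪ range b) ≤ span K (range c) := by
  induction g with
  | zero =>
    intro V _ _ a b _
    exact ⟨Fin.elim0, by simp [range_eq_empty]⟩
  | succ m ih =>
    intro V _ _ a b H
    set a' : Fin m → V := fun i => a i.castSucc with ha'
    set b' : Fin m → V := fun i => b i.castSucc with hb'
    by_cases hα : a (Fin.last m) = 0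
    · have H' : ∀ f : Module.Dual K V,
          ∑ i, (f (a' i) • b' i - f (b' i) • a' i) = 0 := by
        intro f
        have h0 := H f
        rw [Fin.sum_univ_castSucc] at h0
        simpa [hα] using h0
      obtain ⟨c, hc⟩ := ih a' b' H'
      refine ⟨Fin.snoc c (b (Fin.last m)), ?_⟩
      have hsub : span K (range c) ≤
          span K (range (Fin.snoc c (b (Fin.last m)) : Fin (m+1) → V)) :=
        span_mono (range_subset_iff.2 fun j => ⟨j.castSucc, Fin.snoc_castSucc ..⟩)
      rw [span_le]
      rintro x (⟨i, rfl⟩ | ⟨i, rfl⟩)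
      · refine Fin.lastCases ?_ (fun j => ?_) i
        · rw [hα]; exact zero_mem _
        · exact hsub (hc (subset_span (mem_union_left _ ⟨j, rfl⟩)))
      · refine Fin.lastCases ?_ (fun j => ?_) i
        · exact subset_span ⟨Fin.last m, Fin.snoc_last ..⟩
        · exact hsub (hc (subset_span (mem_union_right _ ⟨j, rfl⟩)))
    · obtain ⟨φ, hφ⟩ : ∃ φ : Module.Dual K V, φ (a (Fin.last m)) ≠ 0 := by
        by_contra h
        push_neg at h
        exact hα ((Module.forall_dual_apply_eq_zero_iff K _).mp h)
      set θ : Module.Dual K V := (φ (a (Fin.last m)))⁻¹ • φ with hθdef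
      have hθ : θ (a (Fin.last m)) = 1 := by
        simp only [hθdef, LinearMap.smul_apply, smul_eq_mul]
        exact inv_mul_cancel₀ hφ
      have hβ : b (Fin.last m) ∈ span K (range a' ∪ range b' ∪ {a (Fin.last m)}) := by
        have h0 := H θ
        rw [Fin.sum_univ_castSucc, hθ, one_smul] at h0
        have h1 : b (Fin.last m) = θ (b (Fin.last m)) • a (Fin.last m) -
            ∑ i : Fin m, (θ (a i.castSucc) • b i.castSucc - θ (b i.castSucc) • a i.castSucc) := by
          have h2 : b (Fin.last m) - (θ (b (Fin.last m)) • a (Fin.last m) -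
              ∑ i : Fin m, (θ (a i.castSucc) • b i.castSucc -
                θ (b i.castSucc) • a i.castSucc)) = 0 := by
            rw [← h0]; abel
          exact sub_eq_zero.mp h2
        rw [h1]
        refine sub_mem (smul_mem _ _ (subset_span (mem_union_right _ rfl)))
          (sum_mem fun i _ => sub_mem
            (smul_mem _ _ (subset_span (mem_union_left _ (mem_union_right _ ⟨i, rfl⟩))))
            (smul_mem _ _ (subset_span (mem_union_left _ (mem_union_left _ ⟨i, rfl⟩)))))
      set p : Submodule K V := span K {a (Fin.last m)} with hpdef
      set π := p.mkQ with hπdef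
      have hπα : π (a (Fin.last m)) = 0 := by
        rw [hπdef, Submodule.mkQ_apply, Submodule.Quotient.mk_eq_zero]
        exact mem_span_singleton_self _
      have H'' : ∀ f : Module.Dual K (V ⧸ p),
          ∑ i, (f (π (a' i)) • π (b' i) - f (π (b' i)) • π (a' i)) = 0 := by
        intro f
        have h0 := congrArg π (H (f.comp π))
        rw [map_sum, map_zero] at h0
        simp only [map_sub, map_smul, LinearMap.comp_apply] at h0
        rw [Fin.sum_univ_castSucc] at h0
        simpa [hπα] using h0
      obtain ⟨cq, hcq⟩ := ih (fun i => π (a' i)) (fun i => π (b' i)) H''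
      choose cl hcl using fun i => p.mkQ_surjective (cq i)
      refine ⟨Fin.snoc cl (a (Fin.last m)), ?_⟩
      have hαmem : a (Fin.last m) ∈
          span K (range (Fin.snoc cl (a (Fin.last m)) : Fin (m+1) → V)) :=
        subset_span ⟨Fin.last m, Fin.snoc_last ..⟩
      have key : ∀ x : V, π x ∈ span K (range cq) →
          x ∈ span K (range (Fin.snoc cl (a (Fin.last m)) : Fin (m+1) → V)) := by
        intro x hx
        have hr : range cq = π '' range cl := by
          rw [← range_comp]
          exact congrArg _ (funext fun i => (hcl i).symm)
        rw [hr, ← Submodule.map_span] at hx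
        obtain ⟨y, hy, hyx⟩ := hx
        have hxy : x - y ∈ p := by
          rw [← Submodule.Quotient.eq]
          exact hyx.symm
        have hx' : x = y + (x - y) := by abel
        rw [hx']
        have hcl_sub : range cl ⊆
            range (Fin.snoc cl (a (Fin.last m)) : Fin (m+1) → V) :=
          range_subset_iff.2 fun j => ⟨j.castSucc, Fin.snoc_castSucc ..⟩
        refine add_mem (span_mono hcl_sub hy) ?_
        refine (span_le.2 ?_) hxy
        rintro z rfl
        exact hαmem
      rw [span_le]
      rintro x (⟨i, rfl⟩ | ⟨i, rfl⟩)
      · refine Fin.lastCases ?_ (fun j => ?_) i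
        · exact hαmem
        · exact key _ (hcq (subset_span (mem_union_left _ ⟨j, rfl⟩)))
      · refine Fin.lastCases ?_ (fun j => ?_) i
        · refine key _ ?_
          have hmap : π (b (Fin.last m)) ∈
              Submodule.map π (span K (range a' ∪ range b' ∪ {a (Fin.last m)})) :=
            mem_map_of_mem hβ
          rw [Submodule.map_span] at hmap
          refine hcq ?_
          have himg : π '' (range a' ∪ range b' ∪ {a (Fin.last m)}) ⊆
              (range (fun i => π (a' i)) ∪ range (fun i => π (b' i))) ∪ {0} := by
            rintro z ⟨w, (hw | hw) | hw, rfl⟩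
            · obtain ⟨i, rfl⟩ := hw
              exact Or.inl (Or.inl ⟨i, rfl⟩)
            · obtain ⟨i, rfl⟩ := hw
              exact Or.inl (Or.inr ⟨i, rfl⟩)
            · rw [mem_singleton_iff] at hw
              rw [hw, hπα]; exact Or.inr rfl
          have h5 := span_mono (R := K) himg hmap
          rwa [span_union _ {0}, span_zero_singleton, sup_bot_eq] at h5
        · exact key _ (hcq (subset_span (mem_union_right _ ⟨j, rfl⟩)))


/-! #### Part 1: the surjection onto the free group of rank `g` -/

def p1fun (g : ℕ) : Fin (2 * g + 1) → FreeGroup (Fin g) := fun j =>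
  if h : (j : ℕ) < 2 * g ∧ (j : ℕ) % 2 = 0 then FreeGroup.of ⟨(j : ℕ) / 2, by omega⟩ else 1

lemma p1fun_A (g : ℕ) (i : Fin g) :
    p1fun g ⟨2 * (i : ℕ), by have := i.isLt; omega⟩ = FreeGroup.of i := by
  rw [p1fun, dif_pos ⟨by simp, by simp⟩]
  exact congrArg FreeGroup.of (Fin.ext (by simp))

lemma p1fun_B (g : ℕ) (i : Fin g) :
    p1fun g ⟨2 * (i : ℕ) + 1, by have := i.isLt; omega⟩ = 1 := by
  rw [p1fun, dif_neg (by simp <;> omega)]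

lemma p1fun_H (g : ℕ) : p1fun g ⟨2 * g, by omega⟩ = 1 := by
  rw [p1fun, dif_neg (by simp)]

lemma p1_lift_A (g : ℕ) (i : Fin g) :
    FreeGroup.lift (p1fun g) (genA g i) = FreeGroup.of i := by
  rw [genA, FreeGroup.lift_apply_of]; exact p1fun_A g i

lemma p1_lift_B (g : ℕ) (i : Fin g) : FreeGroup.lift (p1fun g) (genB g i) = 1 := by
  rw [genB, FreeGroup.lift_apply_of]; exact p1fun_B g i

lemma p1_lift_H (g : ℕ) : FreeGroup.lift (p1fun g) (genH g) = 1 := by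
  rw [genH, FreeGroup.lift_apply_of]; exact p1fun_H g

lemma p1_rels (g : ℕ) (e : ℤ) : ∀ r ∈ circleRels g e, FreeGroup.lift (p1fun g) r = 1 := by
  rintro r (⟨i, hr | hr⟩ | hr)
  · rw [hr, map_commutatorElement, p1_lift_H, commutatorElement_one_right]
  · rw [hr, map_commutatorElement, p1_lift_H, commutatorElement_one_right]
  · rw [Set.mem_singleton_iff] at hr
    rw [hr, map_mul, map_zpow, p1_lift_H, one_zpow, mul_one, map_list_prod, List.map_ofFn]
    refine List.prod_eq_one fun x hx => ?_
    rw [List.mem_ofFn] at hx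
    obtain ⟨i, rfl⟩ := hx
    simp only [Function.comp_apply, map_commutatorElement, p1_lift_B,
      commutatorElement_one_right]

lemma part1 (g : ℕ) (e : ℤ) :
    ∃ φ : CircleBundleGroup g e →* FreeGroup (Fin g), Function.Surjective φ := by
  refine ⟨PresentedGroup.toGroup (p1_rels g e), ?_⟩
  have hle : (⊤ : Subgroup (FreeGroup (Fin g))) ≤
      (PresentedGroup.toGroup (p1_rels g e)).range := by
    rw [← FreeGroup.closure_range_of (Fin g), Subgroup.closure_le]
    rintro _ ⟨i, rfl⟩
    exact ⟨PresentedGroup.of ⟨2 * (i : ℕ), by have := i.isLt; omega⟩,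
      by rw [PresentedGroup.toGroup.of]; exact p1fun_A g i⟩
  intro y
  exact hle (Subgroup.mem_top y)

/-! #### Part 2: no surjection onto the free group of rank `g+1` -/

lemma gen_class (g : ℕ) (j : Fin (2 * g + 1)) :
    FreeGroup.of j = genH g ∨ (∃ i : Fin g, FreeGroup.of j = genA g i) ∨
      (∃ i : Fin g, FreeGroup.of j = genB g i) := by
  have hjlt : (j : ℕ) < 2 * g + 1 := j.isLt
  by_cases hj : (j : ℕ) = 2 * g
  · left
    rw [genH]
    exact congrArg FreeGroup.of (Fin.ext (by simpa using hj))
  · have hlt : (j : ℕ) < 2 * g := by omega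
    by_cases hpar : (j : ℕ) % 2 = 0
    · refine Or.inr (Or.inl ⟨⟨(j : ℕ) / 2, by omega⟩, ?_⟩)
      rw [genA]
      exact congrArg FreeGroup.of (Fin.ext (by simp; omega))
    · refine Or.inr (Or.inr ⟨⟨(j : ℕ) / 2, by omega⟩, ?_⟩)
      rw [genB]
      exact congrArg FreeGroup.of (Fin.ext (by simp; omega))

/-- The exponent-sum (abelianization) homomorphism. -/
def expHom (n : ℕ) : FreeGroup (Fin n) →* Multiplicative (Fin n → ℤ) :=
  FreeGroup.lift fun j => Multiplicative.ofAdd (Pi.single j 1)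

/-- The Heisenberg-valued homomorphism attached to two integer vectors. -/
def heisHom (n : ℕ) (c d : Fin n → ℤ) : FreeGroup (Fin n) →* Heis :=
  FreeGroup.lift fun j => ⟨c j, d j, 0⟩

lemma heisHom_x (n : ℕ) (c d : Fin n → ℤ) (w : FreeGroup (Fin n)) :
    (heisHom n c d w).x = ∑ j, c j * (expHom n w).toAdd j := by
  induction w using FreeGroup.induction_on with
  | C1 => simp [map_one]
  | of j =>
    show (heisHom n c d (FreeGroup.of j)).x = ∑ s, c s * (expHom n (FreeGroup.of j)).toAdd s
    rw [heisHom, expHom, FreeGroup.lift_apply_of, FreeGroup.lift_apply_of]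
    simp [Pi.single_apply, mul_ite]
  | inv_of j ih =>
    rw [map_inv, map_inv]
    simp only [Heis.inv_x, toAdd_inv, Pi.neg_apply, mul_neg]
    rw [Finset.sum_neg_distrib]
    exact congrArg Neg.neg ih
  | mul x y ihx ihy =>
    rw [map_mul, map_mul]
    simp only [Heis.mul_x, toAdd_mul, Pi.add_apply, mul_add, Finset.sum_add_distrib]
    omega

lemma heisHom_y (n : ℕ) (c d : Fin n → ℤ) (w : FreeGroup (Fin n)) :
    (heisHom n c d w).y = ∑ j, d j * (expHom n w).toAdd j := by
  induction w using FreeGroup.induction_on with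
  | C1 => simp [map_one]
  | of j =>
    show (heisHom n c d (FreeGroup.of j)).y = ∑ s, d s * (expHom n (FreeGroup.of j)).toAdd s
    rw [heisHom, expHom, FreeGroup.lift_apply_of, FreeGroup.lift_apply_of]
    simp [Pi.single_apply, mul_ite]
  | inv_of j ih =>
    rw [map_inv, map_inv]
    simp only [Heis.inv_y, toAdd_inv, Pi.neg_apply, mul_neg]
    rw [Finset.sum_neg_distrib]
    exact congrArg Neg.neg ih
  | mul x y ihx ihy =>
    rw [map_mul, map_mul]
    simp only [Heis.mul_y, toAdd_mul, Pi.add_apply, mul_add, Finset.sum_add_distrib]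
    omega

lemma part2 (g : ℕ) (hg : 1 ≤ g) (e : ℤ) :
    ¬ ∃ φ : CircleBundleGroup g e →* FreeGroup (Fin (g + 1)),
        Function.Surjective φ := by
  rintro ⟨φ', hφ'⟩
  set ψ : FreeGroup (Fin (2 * g + 1)) →* FreeGroup (Fin (g + 1)) :=
    MonoidHom.comp φ' (PresentedGroup.mk (circleRels g e)) with hψdef
  have hψsurj : Function.Surjective ψ := by
    show Function.Surjective (fun x => φ' (PresentedGroup.mk (circleRels g e) x))
    exact hφ'.comp (PresentedGroup.mk_surjective _)
  have hkill : ∀ r ∈ circleRels g e, ψ r = 1 := by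
    intro r hr
    have h1 : PresentedGroup.mk (circleRels g e) r = 1 :=
      (QuotientGroup.eq_one_iff r).mpr (Subgroup.subset_normalClosure hr)
    exact (congrArg φ' h1).trans (map_one φ')
  -- Step A : ψ kills the central generator h
  have hWcommgen : ∀ j : Fin (2 * g + 1), Commute (ψ (FreeGroup.of j)) (ψ (genH g)) := by
    intro j
    rcases gen_class g j with hj | ⟨i, hj⟩ | ⟨i, hj⟩
    · rw [hj]
    · rw [hj]
      have h1 := hkill _ (Or.inl ⟨i, Or.inl rfl⟩)
      rw [map_commutatorElement] at h1
      exact commutatorElement_eq_one_iff_commute.mp h1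
    · rw [hj]
      have h1 := hkill _ (Or.inl ⟨i, Or.inr rfl⟩)
      rw [map_commutatorElement] at h1
      exact commutatorElement_eq_one_iff_commute.mp h1
  have hWall : ∀ w, Commute (ψ w) (ψ (genH g)) := by
    intro w
    induction w using FreeGroup.induction_on with
    | C1 => rw [map_one]; exact Commute.one_left _
    | of j => exact hWcommgen j
    | inv_of j ih => rw [map_inv]; exact ih.inv_left
    | mul x y ihx ihy => rw [map_mul]; exact ihx.mul_left ihy
  have hW : ψ (genH g) = 1 := by
    refine eq_one_of_commute_of (0 : Fin (g + 1)) ⟨1, by omega⟩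
      (by simp [Fin.ext_iff]) _ fun u => ?_
    obtain ⟨w, hw⟩ := hψsurj (FreeGroup.of u)
    rw [← hw]
    exact hWall w
  -- exponent vectors of the images of the generators
  set A : Fin g → (Fin (g + 1) → ℤ) :=
    fun i => (expHom (g + 1) (ψ (genA g i))).toAdd with hA
  set B : Fin g → (Fin (g + 1) → ℤ) :=
    fun i => (expHom (g + 1) (ψ (genB g i))).toAdd with hB
  -- the symplectic identity from the surface relator
  have hzid : ∀ c d : Fin (g + 1) → ℤ,
      ∑ i : Fin g, ((∑ j, c j * A i j) * (∑ j, d j * B i j)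
        - (∑ j, c j * B i j) * (∑ j, d j * A i j)) = 0 := by
    intro c d
    set Θ : FreeGroup (Fin (2 * g + 1)) →* Heis := (heisHom (g + 1) c d).comp ψ with hΘ
    have hr0 : Θ ((List.ofFn fun i : Fin g => ⁅genA g i, genB g i⁆).prod
        * (genH g) ^ (-e)) = 1 := by
      rw [hΘ, MonoidHom.comp_apply, hkill _ (Or.inr rfl), map_one]
    rw [map_mul, map_zpow, map_list_prod, List.map_ofFn] at hr0
    have hΘH : Θ (genH g) = 1 := by rw [hΘ, MonoidHom.comp_apply, hW, map_one]
    rw [hΘH, one_zpow, mul_one] at hr0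
    have hfn : (List.ofFn (⇑Θ ∘ fun i : Fin g => ⁅genA g i, genB g i⁆)) =
        List.ofFn fun i : Fin g =>
          (⟨0, 0, (Θ (genA g i)).x * (Θ (genB g i)).y
            - (Θ (genB g i)).x * (Θ (genA g i)).y⟩ : Heis) := by
      refine congrArg List.ofFn (funext fun i => ?_)
      rw [Function.comp_apply, map_commutatorElement, Heis.commutator_eq]
    rw [hfn, Heis.prod_central] at hr0
    have hz0 := congrArg Heis.z hr0
    simp only [Heis.one_z] at hz0
    refine Eq.trans (Finset.sum_congr rfl fun i _ => ?_) hz0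
    have hxA : (Θ (genA g i)).x = ∑ j, c j * A i j := heisHom_x (g + 1) c d _
    have hyA : (Θ (genA g i)).y = ∑ j, d j * A i j := heisHom_y (g + 1) c d _
    have hxB : (Θ (genB g i)).x = ∑ j, c j * B i j := heisHom_x (g + 1) c d _
    have hyB : (Θ (genB g i)).y = ∑ j, d j * B i j := heisHom_y (g + 1) c d _
    rw [hxA, hyA, hxB, hyB]
  have M : ∀ s t : Fin (g + 1), ∑ i : Fin g, (A i s * B i t - B i s * A i t) = 0 := by
    intro s t
    have h1 := hzid (Pi.single s 1) (Pi.single t 1)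
    have h2 : ∀ (v : Fin (g + 1) → ℤ) (s' : Fin (g + 1)),
        ∑ j, (Pi.single s' (1 : ℤ) : Fin (g + 1) → ℤ) j * v j = v s' := by
      intro v s'
      simp [Pi.single_apply, ite_mul]
    simp only [h2] at h1
    exact h1
  -- span of the exponent vectors is everything
  have hmem : ∀ w : FreeGroup (Fin (2 * g + 1)),
      (expHom (g + 1) (ψ w)).toAdd ∈ Submodule.span ℤ (Set.range A ∪ Set.range B) := by
    intro w
    induction w using FreeGroup.induction_on with
    | C1 => rw [map_one, map_one]; exact zero_mem _
    | of j =>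
      rcases gen_class g j with hj | ⟨i, hj⟩ | ⟨i, hj⟩
      · show (expHom (g + 1) (ψ (FreeGroup.of j))).toAdd ∈ _
        rw [hj, hW, map_one]
        exact zero_mem _
      · show (expHom (g + 1) (ψ (FreeGroup.of j))).toAdd ∈ _
        rw [hj]
        exact Submodule.subset_span (Or.inl ⟨i, rfl⟩)
      · show (expHom (g + 1) (ψ (FreeGroup.of j))).toAdd ∈ _
        rw [hj]
        exact Submodule.subset_span (Or.inr ⟨i, rfl⟩)
    | inv_of j ih =>
      rw [map_inv, map_inv, toAdd_inv]
      exact neg_mem ih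
    | mul x y ihx ihy =>
      rw [map_mul, map_mul, toAdd_mul]
      exact add_mem ihx ihy
  have hsingleZ : ∀ s : Fin (g + 1),
      Pi.single s (1 : ℤ) ∈ Submodule.span ℤ (Set.range A ∪ Set.range B) := by
    intro s
    obtain ⟨w, hw⟩ := hψsurj (FreeGroup.of s)
    have h1 := hmem w
    rw [hw] at h1
    have h2 : (expHom (g + 1) (FreeGroup.of s)).toAdd = Pi.single s 1 := by
      rw [expHom, FreeGroup.lift_apply_of]
      rfl
    rwa [h2] at h1
  -- pass to ℚ
  set Aq : Fin g → (Fin (g + 1) → ℚ) := fun i s => ((A i s : ℤ) : ℚ) with hAq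
  set Bq : Fin g → (Fin (g + 1) → ℚ) := fun i s => ((B i s : ℤ) : ℚ) with hBq
  have Mq : ∀ s t : Fin (g + 1), ∑ i : Fin g, (Aq i s * Bq i t - Bq i s * Aq i t) = 0 := by
    intro s t
    have h1 : ((∑ i : Fin g, (A i s * B i t - B i s * A i t) : ℤ) : ℚ) = 0 := by
      rw [M s t]; norm_num
    push_cast at h1
    exact h1
  have HQ : ∀ f : Module.Dual ℚ (Fin (g + 1) → ℚ),
      ∑ i : Fin g, (f (Aq i) • Bq i - f (Bq i) • Aq i) = 0 := by
    intro f
    funext t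
    simp only [Finset.sum_apply, Pi.sub_apply, Pi.smul_apply, smul_eq_mul, Pi.zero_apply]
    have hf : ∀ v : Fin (g + 1) → ℚ,
        f v = ∑ s, v s * f (fun j => if s = j then 1 else 0) := by
      intro v
      rw [LinearMap.pi_apply_eq_sum_univ]
      simp [smul_eq_mul]
    calc ∑ i : Fin g, (f (Aq i) * Bq i t - f (Bq i) * Aq i t)
        = ∑ i : Fin g, ∑ s, (Aq i s * Bq i t - Bq i s * Aq i t)
            * f (fun j => if s = j then 1 else 0) := by
          refine Finset.sum_congr rfl fun i _ => ?_
          rw [hf (Aq i), hf (Bq i), Finset.sum_mul, Finset.sum_mul, ← Finset.sum_sub_distrib]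
          refine Finset.sum_congr rfl fun s _ => by ring
      _ = ∑ s, ∑ i : Fin g, (Aq i s * Bq i t - Bq i s * Aq i t)
            * f (fun j => if s = j then 1 else 0) := Finset.sum_comm
      _ = ∑ s, (∑ i : Fin g, (Aq i s * Bq i t - Bq i s * Aq i t))
            * f (fun j => if s = j then 1 else 0) := by
          refine Finset.sum_congr rfl fun s _ => (Finset.sum_mul ..).symm
      _ = 0 := by
          refine Finset.sum_eq_zero fun s _ => ?_
          rw [Mq s t, zero_mul]
  -- the ℚ-span of the vectors is everything
  set L : (Fin (g + 1) → ℤ) →ₗ[ℤ] (Fin (g + 1) → ℚ) :=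
    (AddMonoidHom.mk' (fun v => fun t => ((v t : ℤ) : ℚ))
      (by intro u v; funext t; push_cast; simp)).toIntLinearMap with hL
  have hsingleQ : ∀ s : Fin (g + 1),
      Pi.single s (1 : ℚ) ∈ Submodule.span ℚ (Set.range Aq ∪ Set.range Bq) := by
    intro s
    have h2 := Submodule.mem_map_of_mem (f := L) (hsingleZ s)
    rw [Submodule.map_span] at h2
    have h3 : L '' (Set.range A ∪ Set.range B) ⊆ Set.range Aq ∪ Set.range Bq := by
      rintro _ ⟨w, hw | hw, rfl⟩
      · obtain ⟨i, rfl⟩ := hw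
        exact Or.inl ⟨i, rfl⟩
      · obtain ⟨i, rfl⟩ := hw
        exact Or.inr ⟨i, rfl⟩
    have h4 := Submodule.span_mono (R := ℤ) h3 h2
    have h5 := Submodule.span_le_restrictScalars ℤ ℚ (Set.range Aq ∪ Set.range Bq) h4
    rw [Submodule.restrictScalars_mem] at h5
    have h6 : L (Pi.single s (1 : ℤ)) = (Pi.single s (1 : ℚ) : Fin (g + 1) → ℚ) := by
      funext t
      have h7 : L (Pi.single s (1 : ℤ)) t = (((Pi.single s (1 : ℤ) : Fin (g + 1) → ℤ) t : ℤ) : ℚ) := by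
        rw [hL]
        rfl
      rw [h7, Pi.single_apply, Pi.single_apply, apply_ite (fun z : ℤ => (z : ℚ))]
      norm_num
    rwa [h6] at h5
  have hspanQ : Submodule.span ℚ (Set.range Aq ∪ Set.range Bq) = ⊤ := by
    rw [eq_top_iff]
    rintro v -
    have hv : v = ∑ s, v s • (Pi.single s (1 : ℚ) : Fin (g + 1) → ℚ) := by
      funext t
      simp [Finset.sum_apply, Pi.single_apply, mul_ite]
    rw [hv]
    exact sum_mem fun s _ => Submodule.smul_mem _ _ (hsingleQ s)
  -- contradiction via the wedge lemma
  obtain ⟨cfin, hcfin⟩ := span_wedge ℚ g Aq Bq HQ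
  have htop : Submodule.span ℚ (Set.range cfin) = ⊤ :=
    le_antisymm le_top (hspanQ ▸ hcfin)
  have hle := finrank_le_of_span_eq_top htop
  rw [Module.finrank_fin_fun, Fintype.card_fin] at hle
  omega

end CorankProof

theorem stmt_2 (g : ℕ) (hg : 1 ≤ g) (e : ℤ) :
    (∃ φ : CircleBundleGroup g e →* FreeGroup (Fin g), Function.Surjective φ) ∧
      ¬ ∃ φ : CircleBundleGroup g e →* FreeGroup (Fin (g + 1)),
          Function.Surjective φ := by
  exact ⟨CorankProof.part1 g e, CorankProof.part2 g hg e⟩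
end

section
/- Let g ≥ 1 and e ∈ {1, −1}. The rank of G_{e,g} equals 2g: there exists a set of 2g elements generating G_{e,g} (namely the classes of a_1, b_1, …, a_g, b_g, since the relator [a_1,b_1]⋯[a_g,b_g] = h^{±1} expresses h in terms of them), and no set of fewer than 2g elements generates G_{e,g}. -/
open scoped commutatorElement

open Classical in
/-- Any finite generating set of `ℤ^n` (multiplicatively) has at least `n` elements. -/
lemma aux_card {n : ℕ} (S : Finset (Multiplicative (Fin n → ℤ)))
    (hS : Subgroup.closure (S : Set (Multiplicative (Fin n → ℤ))) = ⊤) : n ≤ S.card := by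
  classical
  set f : (Fin n → ℤ) → (Fin n → ℚ) := fun v i => (v i : ℚ) with hf
  set T : Finset (Fin n → ℚ) := S.image (fun x => f x.toAdd) with hT
  have key : ∀ x : Multiplicative (Fin n → ℤ),
      f x.toAdd ∈ Submodule.span ℚ (T : Set (Fin n → ℚ)) := by
    intro x
    have hx : x ∈ Subgroup.closure (S : Set (Multiplicative (Fin n → ℤ))) := hS ▸ trivial
    refine Subgroup.closure_induction ?_ ?_ ?_ ?_ hx
    · intro y hy
      exact Submodule.subset_span (Finset.mem_coe.2 (Finset.mem_image_of_mem _ hy))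
    · have : f (Multiplicative.toAdd 1) = 0 := by funext i; simp [hf]
      rw [this]; exact Submodule.zero_mem _
    · intro a b _ _ ha hb
      have : f (Multiplicative.toAdd (a * b)) = f a.toAdd + f b.toAdd := by
        funext i; simp [hf]
      rw [this]; exact Submodule.add_mem _ ha hb
    · intro a _ ha
      have : f (Multiplicative.toAdd a⁻¹) = -(f a.toAdd) := by
        funext i; simp [hf]
      rw [this]; exact Submodule.neg_mem _ ha
  have hsingle : ∀ i : Fin n, (Pi.single i 1 : Fin n → ℚ) ∈
      Submodule.span ℚ (T : Set (Fin n → ℚ)) := by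
    intro i
    have := key (Multiplicative.ofAdd (Pi.single i 1))
    have heq : f (Multiplicative.toAdd (Multiplicative.ofAdd (Pi.single i (1:ℤ)))) =
        (Pi.single i 1 : Fin n → ℚ) := by
      funext j
      by_cases h : j = i
      · subst h; simp [hf]
      · simp [hf, Pi.single_apply, h]
    rwa [heq] at this
  have hspan : Submodule.span ℚ (T : Set (Fin n → ℚ)) = ⊤ := by
    rw [eq_top_iff]
    intro v _
    have hv : v = ∑ i : Fin n, v i • (Pi.single i 1 : Fin n → ℚ) := by
      funext j
      simp [Pi.single_apply, Finset.sum_ite_eq]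
    rw [hv]
    exact Submodule.sum_mem _ fun i _ => Submodule.smul_mem _ _ (hsingle i)
  have h1 : Module.finrank ℚ (Submodule.span ℚ ((T : Set (Fin n → ℚ)))) ≤ T.card := by
    have := finrank_span_le_card (R := ℚ) (T : Set (Fin n → ℚ))
    simpa using this
  rw [hspan] at h1
  have h2 : Module.finrank ℚ (⊤ : Submodule ℚ (Fin n → ℚ)) = n := by
    rw [finrank_top, Module.finrank_fin_fun]
  rw [h2] at h1
  exact h1.trans (Finset.card_image_le)

/-- The target function sending generator `j` to the `j`-th coordinate vector
(and `h` to `0`). -/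
def abFun (g : ℕ) (j : Fin (2 * g + 1)) : Multiplicative (Fin (2 * g) → ℤ) :=
  Multiplicative.ofAdd (fun i => if (i : ℕ) = (j : ℕ) then 1 else 0)

lemma abFun_H (g : ℕ) : abFun g ⟨2 * g, by omega⟩ = 1 := by
  show Multiplicative.ofAdd _ = 1
  have : (fun i : Fin (2 * g) => if (i : ℕ) = 2 * g then (1:ℤ) else 0) = 0 := by
    funext i
    have := i.isLt
    simp only [Pi.zero_apply, ite_eq_right_iff]
    omega
  rw [this]
  rfl

lemma abFun_rels (g : ℕ) (e : ℤ) : ∀ r ∈ circleRels g e, FreeGroup.lift (abFun g) r = 1 := by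
  intro r hr
  rcases hr with ⟨i, h | h⟩ | h
  · rw [h, map_commutatorElement]
    exact commutatorElement_eq_one_iff_mul_comm.mpr (mul_comm _ _)
  · rw [h, map_commutatorElement]
    exact commutatorElement_eq_one_iff_mul_comm.mpr (mul_comm _ _)
  · rw [Set.mem_singleton_iff] at h
    rw [h, map_mul, map_zpow, map_list_prod, List.map_ofFn]
    have h1 : (List.ofFn ((FreeGroup.lift (abFun g)) ∘ fun i : Fin g =>
        ⁅genA g i, genB g i⁆)).prod = 1 := by
      apply List.prod_eq_one
      intro x hx
      rw [List.mem_ofFn] at hx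
      obtain ⟨i, rfl⟩ := hx
      show FreeGroup.lift (abFun g) ⁅genA g i, genB g i⁆ = 1
      rw [map_commutatorElement]
      exact commutatorElement_eq_one_iff_mul_comm.mpr (mul_comm _ _)
    have h2 : FreeGroup.lift (abFun g) (genH g) = 1 :=
      (FreeGroup.lift_apply_of).trans (abFun_H g)
    rw [h1, h2, one_mul, one_zpow]

/-- The abelianization-style homomorphism to `ℤ^{2g}`. -/
def abHom (g : ℕ) (e : ℤ) : CircleBundleGroup g e →* Multiplicative (Fin (2 * g) → ℤ) :=
  PresentedGroup.toGroup (abFun_rels g e)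

lemma abHom_surj (g : ℕ) (e : ℤ) : Function.Surjective (abHom g e) := by
  intro y
  refine ⟨List.prod (α := CircleBundleGroup g e) (List.ofFn fun i : Fin (2 * g) =>
    @HPow.hPow (CircleBundleGroup g e) ℤ (CircleBundleGroup g e) _
      (PresentedGroup.of (rels := circleRels g e) i.castSucc) (y.toAdd i)), ?_⟩
  rw [map_list_prod, List.map_ofFn, List.prod_ofFn]
  apply Multiplicative.toAdd.injective
  rw [toAdd_prod]
  funext j
  have hterm : ∀ i : Fin (2 * g),
      Multiplicative.toAdd ((abHom g e) (@HPow.hPow (CircleBundleGroup g e) ℤ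
        (CircleBundleGroup g e) _ (PresentedGroup.of (rels := circleRels g e)
        i.castSucc) (y.toAdd i))) j = if j = i then y.toAdd i else 0 := by
    intro i
    erw [map_zpow, toAdd_zpow,
      show (abHom g e) (PresentedGroup.of i.castSucc) = abFun g i.castSucc from
        PresentedGroup.toGroup.of (abFun_rels g e)]
    show (y.toAdd i • (fun k : Fin (2 * g) =>
      if (k : ℕ) = ((i.castSucc : Fin (2 * g + 1)) : ℕ) then (1:ℤ) else 0)) j
      = if j = i then y.toAdd i else 0
    simp only [Pi.smul_apply, smul_eq_mul, Fin.coe_castSucc]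
    by_cases h : j = i
    · subst h; simp
    · have : (j : ℕ) ≠ (i : ℕ) := fun hc => h (Fin.ext hc)
      simp [this, h]
  rw [Finset.sum_apply]
  calc (∑ i : Fin (2 * g), Multiplicative.toAdd ((abHom g e)
          ((PresentedGroup.of (rels := circleRels g e) i.castSucc) ^ (y.toAdd i))) j)
      = ∑ i : Fin (2 * g), if j = i then y.toAdd i else 0 := by
        exact Finset.sum_congr rfl fun i _ => hterm i
    _ = y.toAdd j := by rw [Finset.sum_ite_eq]; simp

theorem part1 (g : ℕ) (e : ℤ) (he : e = 1 ∨ e = -1) :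
    (Subgroup.closure
        (Set.range fun i : Fin (2 * g) =>
          (PresentedGroup.of (rels := circleRels g e) i.castSucc :
            CircleBundleGroup g e)) = ⊤) := by
  set K := Subgroup.closure
        (Set.range fun i : Fin (2 * g) =>
          (PresentedGroup.of (rels := circleRels g e) i.castSucc :
            CircleBundleGroup g e)) with hK
  have hmem : ∀ j : Fin (2 * g + 1), (j : ℕ) < 2 * g →
      (PresentedGroup.of (rels := circleRels g e) j : CircleBundleGroup g e) ∈ K := by
    intro j hj
    apply Subgroup.subset_closure
    refine ⟨⟨(j : ℕ), hj⟩, ?_⟩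
    show PresentedGroup.of (⟨(j : ℕ), hj⟩ : Fin (2 * g)).castSucc = PresentedGroup.of j
    have : (⟨(j : ℕ), hj⟩ : Fin (2 * g)).castSucc = j := Fin.ext rfl
    rw [this]
  have hH : (PresentedGroup.mk (circleRels g e) (genH g) : CircleBundleGroup g e) ∈ K := by
    have hr : ((List.ofFn fun i : Fin g => ⁅genA g i, genB g i⁆).prod * (genH g) ^ (-e))
        ∈ circleRels g e := Or.inr rfl
    have h1 : (PresentedGroup.mk (circleRels g e)
        ((List.ofFn fun i : Fin g => ⁅genA g i, genB g i⁆).prod * (genH g) ^ (-e)) :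
        CircleBundleGroup g e) = 1 := by
      apply (QuotientGroup.eq_one_iff _).mpr
      exact Subgroup.subset_normalClosure hr
    rw [map_mul, map_zpow, map_list_prod] at h1
    have hprodmem : ((List.ofFn fun i : Fin g => ⁅genA g i, genB g i⁆).map
        (PresentedGroup.mk (circleRels g e))).prod ∈ K := by
      apply Subgroup.list_prod_mem
      intro x hx
      rw [List.mem_map] at hx
      obtain ⟨y, hy, rfl⟩ := hx
      rw [List.mem_ofFn] at hy
      obtain ⟨i, rfl⟩ := hy
      rw [map_commutatorElement, commutatorElement_def]
      have hA : (PresentedGroup.mk (circleRels g e) (genA g i) : CircleBundleGroup g e) ∈ K :=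
        hmem ⟨2 * (i : ℕ), by have := i.isLt; omega⟩
          (by show 2 * (i : ℕ) < 2 * g; have := i.isLt; omega)
      have hB : (PresentedGroup.mk (circleRels g e) (genB g i) : CircleBundleGroup g e) ∈ K :=
        hmem ⟨2 * (i : ℕ) + 1, by have := i.isLt; omega⟩
          (by show 2 * (i : ℕ) + 1 < 2 * g; have := i.isLt; omega)
      exact K.mul_mem (K.mul_mem (K.mul_mem hA hB) (K.inv_mem hA)) (K.inv_mem hB)
    have hpow : (PresentedGroup.mk (circleRels g e) (genH g) : CircleBundleGroup g e) ^ e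
        ∈ K := by
      have := h1
      rw [mul_eq_one_iff_eq_inv, ← zpow_neg, neg_neg] at this
      rw [← this]
      exact hprodmem
    rcases he with rfl | rfl
    · simpa using hpow
    · rw [zpow_neg_one] at hpow
      exact (Subgroup.inv_mem_iff K).mp hpow
  rw [eq_top_iff, ← PresentedGroup.closure_range_of (circleRels g e), Subgroup.closure_le]
  rintro _ ⟨j, rfl⟩
  rcases Nat.lt_or_ge (j : ℕ) (2 * g) with hj | hj
  · exact hmem j hj
  · have hj2 : j = ⟨2 * g, by omega⟩ := Fin.ext (by show (j : ℕ) = 2 * g; have := j.isLt; omega)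
    rw [hj2]
    exact hH


theorem stmt_5 (g : ℕ) (hg : 1 ≤ g) (e : ℤ) (he : e = 1 ∨ e = -1) :
    (Subgroup.closure
        (Set.range fun i : Fin (2 * g) =>
          (PresentedGroup.of (rels := circleRels g e) i.castSucc :
            CircleBundleGroup g e)) = ⊤) ∧
      (∀ S : Finset (CircleBundleGroup g e),
        Subgroup.closure (S : Set (CircleBundleGroup g e)) = ⊤ → 2 * g ≤ S.card) := by
  constructor
  · exact part1 g e he
  · intro S hS
    classical
    have hmap : Subgroup.closure ((S.image (abHom g e) : Finset _) :
        Set (Multiplicative (Fin (2 * g) → ℤ))) = ⊤ := by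
      rw [Finset.coe_image, ← MonoidHom.map_closure, hS, ← MonoidHom.range_eq_map]
      exact MonoidHom.range_eq_top.mpr (abHom_surj g e)
    have h1 : 2 * g ≤ (S.image (abHom g e)).card := aux_card _ hmap
    exact h1.trans Finset.card_image_le
end

section
/- Let G be a group generated by r elements (i.e., there is a subset S of G with |S| = r whose generated subgroup is all of G). If φ : G → FreeGroup (Fin r) is a surjective group homomorphism onto the free group of rank r, then φ is an isomorphism; in particular G is isomorphic to the free group of rank r. -/
namespace Stmt7

variable {r : ℕ}

/-- No adjacent cancelling pair. -/
def NoCancel (M : List (Fin r × Bool)) : Prop :=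
  ∀ (k : ℕ) (a : Fin r) (b : Bool), M[k]? = some (a, b) → M[k + 1]? = some (a, !b) → False

variable (M : List (Fin r × Bool))

def Pp (a : Fin r) (j : Fin (M.length + 1)) : Prop :=
  M[j.val]? = some (a, true) ∨ (0 < j.val ∧ M[j.val - 1]? = some (a, false))

def Qq (a : Fin r) (j : Fin (M.length + 1)) : Prop :=
  (0 < j.val ∧ M[j.val - 1]? = some (a, true)) ∨ M[j.val]? = some (a, false)

lemma lt_of_get? {k : ℕ} {v : Fin r × Bool} (h : M[k]? = some v) : k < M.length := by
  by_contra hk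
  rw [List.getElem?_eq_none (by omega)] at h
  exact absurd h (Option.some_ne_none v).symm

variable {M}

noncomputable def eqv (hM : NoCancel M) (a : Fin r) : {j // Pp M a j} ≃ {j // Qq M a j} where
  toFun := fun x =>
    if h1 : M[x.val.val]? = some (a, true) then
      ⟨⟨x.val.val + 1, by have := lt_of_get? M h1; omega⟩,
        Or.inl ⟨Nat.succ_pos _, by simpa using h1⟩⟩
    else
      ⟨⟨x.val.val - 1, by omega⟩, Or.inr (x.property.resolve_left h1).2⟩
  invFun := fun x =>
    if h1 : 0 < x.val.val ∧ M[x.val.val - 1]? = some (a, true) then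
      ⟨⟨x.val.val - 1, by omega⟩, Or.inl h1.2⟩
    else
      ⟨⟨x.val.val + 1, by have := lt_of_get? M (x.property.resolve_left h1); omega⟩,
        Or.inr ⟨Nat.succ_pos _, by simpa using x.property.resolve_left h1⟩⟩
  left_inv := by
    rintro ⟨j, hj⟩
    dsimp only
    by_cases h1 : M[j.val]? = some (a, true)
    · rw [dif_pos h1]
      rw [dif_pos (show 0 < j.val + 1 ∧ M[j.val + 1 - 1]? = some (a, true) from
        ⟨Nat.succ_pos _, by simpa using h1⟩)]
      exact Subtype.ext (Fin.ext (show j.val + 1 - 1 = j.val by omega))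
    · rw [dif_neg h1]
      have h2 := hj.resolve_left h1
      have hno : ¬ (0 < j.val - 1 ∧ M[j.val - 1 - 1]? = some (a, true)) := by
        rintro ⟨hpos, hget⟩
        exact hM (j.val - 1 - 1) a true hget (by
          have : j.val - 1 - 1 + 1 = j.val - 1 := by omega
          rw [this]; simpa using h2.2)
      rw [dif_neg hno]
      exact Subtype.ext (Fin.ext (show j.val - 1 + 1 = j.val by omega))
  right_inv := by
    rintro ⟨i, hi⟩
    dsimp only
    by_cases h1 : 0 < i.val ∧ M[i.val - 1]? = some (a, true)
    · rw [dif_pos h1]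
      rw [dif_pos (show M[i.val - 1]? = some (a, true) from h1.2)]
      exact Subtype.ext (Fin.ext (show i.val - 1 + 1 = i.val by omega))
    · rw [dif_neg h1]
      have h2 := hi.resolve_left h1
      have hno : ¬ (M[i.val + 1]? = some (a, true)) := by
        intro hget
        exact hM i.val a false h2 (by simpa using hget)
      rw [dif_neg hno]
      exact Subtype.ext (Fin.ext (show i.val + 1 - 1 = i.val by omega))

noncomputable def sigma (hM : NoCancel M) (a : Fin r) : Equiv.Perm (Fin (M.length + 1)) :=
  letI : DecidablePred (Pp M a) := Classical.decPred _
  letI : DecidablePred (Qq M a) := Classical.decPred _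
  (eqv hM a).extendSubtype

lemma sigma_up (hM : NoCancel M) {a : Fin r} {k : ℕ} (hk : k < M.length)
    (h : M[k]? = some (a, true)) :
    sigma hM a ⟨k, by omega⟩ = ⟨k + 1, by omega⟩ := by
  letI : DecidablePred (Pp M a) := Classical.decPred _
  letI : DecidablePred (Qq M a) := Classical.decPred _
  have hp : Pp M a ⟨k, by omega⟩ := Or.inl h
  rw [sigma, Equiv.extendSubtype_apply_of_mem (eqv hM a) _ hp]
  simp only [eqv, Equiv.coe_fn_mk]
  rw [dif_pos h]

lemma sigma_down (hM : NoCancel M) {a : Fin r} {k : ℕ} (hk : k < M.length)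
    (h : M[k]? = some (a, false)) :
    sigma hM a ⟨k + 1, by omega⟩ = ⟨k, by omega⟩ := by
  letI : DecidablePred (Pp M a) := Classical.decPred _
  letI : DecidablePred (Qq M a) := Classical.decPred _
  have hp : Pp M a ⟨k + 1, by omega⟩ := Or.inr ⟨Nat.succ_pos _, by simpa using h⟩
  rw [sigma, Equiv.extendSubtype_apply_of_mem (eqv hM a) _ hp]
  simp only [eqv, Equiv.coe_fn_mk]
  have hno : ¬ (M[k + 1]? = some (a, true)) := fun hget => hM k a false h (by simpa using hget)
  rw [dif_neg hno]
  exact Fin.ext (show k + 1 - 1 = k by omega)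


lemma eval_take (hM : NoCancel M) :
    ∀ m (hm : m ≤ M.length),
      (((M.take m).reverse.map (fun p => cond p.2 (sigma hM p.1) (sigma hM p.1)⁻¹)).prod)
          ⟨0, Nat.succ_pos _⟩ = ⟨m, by omega⟩ := by
  intro m
  induction m with
  | zero => intro _; simp
  | succ m ih =>
    intro hm
    have hmlt : m < M.length := by omega
    rw [List.take_succ, List.getElem?_eq_getElem hmlt]
    simp only [Option.toList_some, List.reverse_append, List.reverse_cons, List.reverse_nil,
      List.nil_append, List.cons_append, List.map_cons, List.prod_cons, List.nil_append]
    rw [Equiv.Perm.mul_apply, ih (by omega)]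
    rcases hb : M[m] with ⟨a, b⟩
    have hget : M[m]? = some (a, b) := by rw [List.getElem?_eq_getElem hmlt, hb]
    cases b with
    | true =>
      simpa using sigma_up hM hmlt hget
    | false =>
      simp only [cond_false]
      have := sigma_down hM hmlt hget
      rw [← this]; exact Equiv.symm_apply_apply _ _

lemma noCancel_of_reduced {L : List (Fin r × Bool)} (hL : FreeGroup.reduce L = L) :
    ∀ (k : ℕ) (a : Fin r) (b : Bool), L[k]? = some (a, b) → L[k + 1]? = some (a, !b) → False := by
  intro k a b h1 h2
  have hk1 : k + 1 < L.length := lt_of_get? L h2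
  have hd : L.drop k = (a, b) :: (a, !b) :: L.drop (k + 2) := by
    rw [List.drop_eq_getElem_cons (by omega)]
    congr 1
    · have := List.getElem?_eq_getElem (l := L) (i := k) (by omega)
      rw [this] at h1; exact Option.some_injective _ h1
    rw [List.drop_eq_getElem_cons (by omega)]
    congr 1
    · have := List.getElem?_eq_getElem (l := L) (i := k + 1) (by omega)
      rw [this] at h2; exact Option.some_injective _ h2
  have : FreeGroup.reduce L = L.take k ++ (a, b) :: (a, !b) :: L.drop (k + 2) := by
    rw [hL]; rw [← hd]; exact (List.take_append_drop k L).symm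
  exact FreeGroup.reduce.not this

lemma noCancel_reverse_of_reduced {L : List (Fin r × Bool)} (hL : FreeGroup.reduce L = L) :
    NoCancel L.reverse := by
  intro k a b h1 h2
  have hk1 : k + 1 < L.reverse.length := lt_of_get? _ h2
  have hlen : k + 1 < L.length := by simpa using hk1
  have e1 : L[L.length - 1 - k] = (a, b) := by
    have hk : k < L.reverse.length := by omega
    have := (List.getElem?_eq_getElem hk).symm.trans h1
    rw [List.getElem_reverse] at this
    exact Option.some_injective _ this
  have e2 : L[L.length - 1 - (k + 1)] = (a, !b) := by
    have := (List.getElem?_eq_getElem hk1).symm.trans h2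
    rw [List.getElem_reverse] at this
    exact Option.some_injective _ this
  set p := L.length - 1 - (k + 1) with hp
  have hpk : p + 1 = L.length - 1 - k := by omega
  have hpe : p + 1 < L.length := by omega
  refine noCancel_of_reduced hL p a (!b) ?_ ?_
  · rw [List.getElem?_eq_getElem (by omega), e2]
  · rw [List.getElem?_eq_getElem hpe, Bool.not_not]
    congr 1
    rw [show L[p+1] = L[L.length - 1 - k]'(by omega) from by congr 1]
    exact e1

theorem exists_perm_hom (x : FreeGroup (Fin r)) (hx : x ≠ 1) :
    ∃ (n : ℕ) (f : FreeGroup (Fin r) →* Equiv.Perm (Fin n)), f x ≠ 1 := by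
  classical
  set L := x.toWord with hLdef
  have hred : FreeGroup.reduce L = L := FreeGroup.reduce_toWord x
  set M := L.reverse with hMdef
  have hM : NoCancel M := noCancel_reverse_of_reduced hred
  refine ⟨M.length + 1, FreeGroup.lift (sigma hM), ?_⟩
  have hx0 : L ≠ [] := fun h => hx (FreeGroup.toWord_eq_nil_iff.mp h)
  have hn : 0 < M.length := by simpa [hMdef] using List.length_pos_iff.mpr hx0
  intro hone
  have heval := eval_take hM M.length le_rfl
  rw [List.take_length] at heval
  have hMrev : M.reverse = L := by simp [hMdef]
  rw [hMrev] at heval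
  have hxL : x = FreeGroup.mk L := (FreeGroup.mk_toWord).symm
  have hlift : FreeGroup.lift (sigma hM) x
      = (L.map (fun p => cond p.2 (sigma hM p.1) (sigma hM p.1)⁻¹)).prod := by
    rw [hxL]; exact FreeGroup.lift_mk
  rw [hone] at hlift
  have h0 := congrArg (fun σ : Equiv.Perm (Fin (M.length + 1)) => σ ⟨0, Nat.succ_pos _⟩) hlift
  simp only [heval, Equiv.Perm.one_apply] at h0
  have : (0 : ℕ) = M.length := congrArg Fin.val h0
  omega

theorem hopf (ψ : FreeGroup (Fin r) →* FreeGroup (Fin r)) (hs : Function.Surjective ψ) :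
    Function.Injective ψ := by
  rw [injective_iff_map_eq_one]
  intro x hx1
  by_contra hx
  obtain ⟨n, f, hf⟩ := exists_perm_hom x hx
  haveI : Finite (FreeGroup (Fin r) →* Equiv.Perm (Fin n)) :=
    Finite.of_equiv _ (FreeGroup.lift : (Fin r → Equiv.Perm (Fin n)) ≃ _)
  have hinj : Function.Injective
      (fun g : FreeGroup (Fin r) →* Equiv.Perm (Fin n) => g.comp ψ) := by
    intro g g' h
    refine MonoidHom.ext fun y => ?_
    obtain ⟨z, rfl⟩ := hs y
    exact DFunLike.congr_fun h z
  obtain ⟨g, hg⟩ := Finite.injective_iff_surjective.mp hinj f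
  apply hf
  have := congrArg (fun h : FreeGroup (Fin r) →* Equiv.Perm (Fin n) => h x) hg
  simp only at this
  rw [← this]
  show g (ψ x) = 1
  rw [hx1, map_one]

end Stmt7

theorem stmt_7 {G : Type*} [Group G] (r : ℕ) (S : Finset G)
    (hcard : S.card = r) (hgen : Subgroup.closure (S : Set G) = ⊤)
    (φ : G →* FreeGroup (Fin r)) (hφ : Function.Surjective φ) :
    Function.Bijective φ := by
  classical
  refine ⟨?_, hφ⟩
  let e : S ≃ Fin r := S.equivFinOfCardEq hcard
  let π : FreeGroup (Fin r) →* G := FreeGroup.lift (fun i => ((e.symm i : S) : G))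
  have hπ : Function.Surjective π := by
    have hle : Subgroup.closure (S : Set G) ≤ π.range := by
      rw [Subgroup.closure_le]
      intro s hs
      exact ⟨FreeGroup.of (e ⟨s, hs⟩), by simp [π]⟩
    have : π.range = ⊤ := top_le_iff.mp (hgen ▸ hle)
    intro g
    have : g ∈ π.range := this ▸ Subgroup.mem_top g
    exact this
  have hψ : Function.Surjective (φ.comp π) := hφ.comp hπ
  have hinj := Stmt7.hopf (φ.comp π) hψ
  intro g1 g2 h
  obtain ⟨x1, rfl⟩ := hπ g1
  obtain ⟨x2, rfl⟩ := hπ g2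
  exact congrArg π (hinj (by simpa using h))
end
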